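/- For 0 < h < 1, the function φ(f) = exp(−‖f‖²/(4h)) on a complex Hilbert space H is σ-positive for σ(f,g) = Im⟨f,g⟩; i.e., for all n, all a_1,…,a_n ∈ ℂ and f_1,…,f_n ∈ H, ∑_{j,k} a_j conj(a_k) e^{-(i/2)Im⟨f_j,f_k⟩} e^{-‖f_j − f_k‖²/(4h)} ≥ 0. -/

import Mathlib

open scoped InnerProductSpace ComplexOrder

noncomputable section

open Complex Matrix Finset

private lemma hasSum_cexp (z : ℂ) :
    HasSum (fun m : ℕ => z ^ m / m.factorial) (Complex.exp z) := by
  rw [Complex.exp_eq_exp_ℂ, NormedSpace.exp_eq_tsum_div]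
  exact (NormedSpace.expSeries_div_summable z).hasSum

private lemma psd_ones (n : ℕ) : (Matrix.of fun _ _ : Fin n => (1 : ℂ)).PosSemidef := by
  refine Matrix.PosSemidef.of_dotProduct_mulVec_nonneg ?_ ?_
  · ext j k; simp [Matrix.conjTranspose_apply]
  · intro x
    have : star x ⬝ᵥ ((Matrix.of fun _ _ : Fin n => (1 : ℂ)) *ᵥ x)
        = star (∑ k, x k) * ∑ k, x k := by
      simp [dotProduct, Matrix.mulVec, Finset.sum_mul, star_sum]
    rw [this]
    exact star_mul_self_nonneg _

private lemma psd_entrywise_mul {n : ℕ} {A B : Matrix (Fin n) (Fin n) ℂ}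
    (hA : A.PosSemidef) (hB : B.PosSemidef) :
    (Matrix.of fun j k => A j k * B j k).PosSemidef := by
  obtain ⟨C, rfl⟩ : ∃ C : Matrix (Fin n) (Fin n) ℂ, A = Cᴴ * C := by
    open scoped MatrixOrder Matrix.Norms.L2Operator in
    exact CStarAlgebra.nonneg_iff_eq_star_mul_self.mp hA.nonneg
  obtain ⟨D, rfl⟩ : ∃ D : Matrix (Fin n) (Fin n) ℂ, B = Dᴴ * D := by
    open scoped MatrixOrder Matrix.Norms.L2Operator in
    exact CStarAlgebra.nonneg_iff_eq_star_mul_self.mp hB.nonneg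
  have key : (Matrix.of fun j k => (Cᴴ * C) j k * (Dᴴ * D) j k)
      = (Matrix.of fun (p : Fin n × Fin n) j => C p.1 j * D p.2 j)ᴴ
        * (Matrix.of fun (p : Fin n × Fin n) j => C p.1 j * D p.2 j) := by
    ext j k
    simp only [Matrix.of_apply, Matrix.mul_apply, Matrix.conjTranspose_apply,
      Fintype.sum_prod_type, Finset.sum_mul_sum, star_mul']
    refine Finset.sum_congr rfl fun r _ => Finset.sum_congr rfl fun s _ => ?_
    ring
  rw [key]
  exact Matrix.posSemidef_conjTranspose_mul_self _

private lemma psd_entrywise_pow {n : ℕ} {B : Matrix (Fin n) (Fin n) ℂ}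
    (hB : B.PosSemidef) (m : ℕ) :
    (Matrix.of fun j k => (B j k) ^ m).PosSemidef := by
  induction m with
  | zero => simpa using psd_ones n
  | succ m ih =>
      have := psd_entrywise_mul ih hB
      simpa [pow_succ] using this

private lemma psd_smul {n : ℕ} {M : Matrix (Fin n) (Fin n) ℂ} (hM : M.PosSemidef)
    {r : ℝ} (hr : 0 ≤ r) : ((r : ℂ) • M).PosSemidef := by
  refine Matrix.PosSemidef.of_dotProduct_mulVec_nonneg ?_ ?_
  · have h1 := hM.1
    unfold Matrix.IsHermitian at h1 ⊢
    rw [Matrix.conjTranspose_smul, h1]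
    congr 1
    simp [RCLike.star_def]
  · intro x
    have : star x ⬝ᵥ (((r : ℂ) • M) *ᵥ x) = (r : ℂ) * (star x ⬝ᵥ (M *ᵥ x)) := by
      rw [Matrix.smul_mulVec, dotProduct_smul, smul_eq_mul]
    rw [this]
    exact mul_nonneg (Complex.zero_le_real.mpr hr) (hM.dotProduct_mulVec_nonneg x)

private lemma psd_gram {H : Type*} [NormedAddCommGroup H] [InnerProductSpace ℂ H]
    {n : ℕ} (f : Fin n → H) :
    (Matrix.of fun j k => (⟪f j, f k⟫_ℂ : ℂ)).PosSemidef := by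
  refine Matrix.PosSemidef.of_dotProduct_mulVec_nonneg ?_ ?_
  · ext j k
    simp [Matrix.conjTranspose_apply, inner_conj_symm]
  · intro x
    have h1 : star x ⬝ᵥ ((Matrix.of fun j k => (⟪f j, f k⟫_ℂ : ℂ)) *ᵥ x)
        = ⟪∑ j, x j • f j, ∑ k, x k • f k⟫_ℂ := by
      simp only [dotProduct, Matrix.mulVec, Matrix.of_apply, Pi.star_apply,
        sum_inner, inner_sum, inner_smul_left, inner_smul_right, Finset.mul_sum]
      rw [Finset.sum_comm]
      refine Finset.sum_congr rfl fun j _ => Finset.sum_congr rfl fun k _ => ?_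
      simp [RCLike.star_def]
      ring
    rw [h1, inner_self_eq_norm_sq_to_K]
    have h2 : (0:ℂ) ≤ ((‖∑ k, x k • f k‖ ^ 2 : ℝ) : ℂ) :=
      Complex.zero_le_real.mpr (by positivity)
    push_cast at h2
    exact h2

/-- quadratic form of PSD matrix, in the `a j * conj (a k)` convention -/
private lemma psd_qf {n : ℕ} {M : Matrix (Fin n) (Fin n) ℂ} (hM : M.PosSemidef)
    (a : Fin n → ℂ) :
    0 ≤ ∑ j, ∑ k, a j * (starRingEnd ℂ) (a k) * M j k := by
  have h := hM.dotProduct_mulVec_nonneg (star a)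
  have heq : star (star a) ⬝ᵥ (M *ᵥ star a)
      = ∑ j, ∑ k, a j * (starRingEnd ℂ) (a k) * M j k := by
    simp only [dotProduct, Matrix.mulVec, star_star, Pi.star_apply, Finset.mul_sum]
    refine Finset.sum_congr rfl fun j _ => Finset.sum_congr rfl fun k _ => ?_
    simp only [RCLike.star_def]
    ring
  rwa [heq] at h

/-- entrywise exponential of a PSD matrix has nonnegative quadratic form -/
private lemma psd_exp_qf {n : ℕ} {B : Matrix (Fin n) (Fin n) ℂ} (hB : B.PosSemidef)
    (a : Fin n → ℂ) :
    0 ≤ ∑ j, ∑ k, a j * (starRingEnd ℂ) (a k) * Complex.exp (B j k) := by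
  set S := ∑ j, ∑ k, a j * (starRingEnd ℂ) (a k) * Complex.exp (B j k) with hS
  set g : ℕ → ℂ := fun N => ∑ j, ∑ k, a j * (starRingEnd ℂ) (a k) *
    ∑ m ∈ Finset.range N, (B j k) ^ m / m.factorial with hg
  have htend : Filter.Tendsto g Filter.atTop (nhds S) := by
    refine tendsto_finset_sum _ fun j _ => tendsto_finset_sum _ fun k _ => ?_
    exact ((hasSum_cexp (B j k)).tendsto_sum_nat).const_mul _
  have hnonneg : ∀ N, 0 ≤ g N := by
    intro N
    have hSN : (Matrix.of fun j k =>
        ∑ m ∈ Finset.range N, (B j k) ^ m / m.factorial).PosSemidef := by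
      have hmat : (Matrix.of fun j k => ∑ m ∈ Finset.range N, (B j k) ^ m / m.factorial)
          = ∑ m ∈ Finset.range N,
            (((m.factorial : ℝ)⁻¹ : ℝ) : ℂ) • (Matrix.of fun j k => (B j k) ^ m) := by
        ext j k
        simp only [Matrix.of_apply, Matrix.sum_apply, Matrix.smul_apply, smul_eq_mul]
        refine Finset.sum_congr rfl fun m _ => ?_
        push_cast
        ring
      rw [hmat]
      refine Finset.sum_induction _ _ (fun A B hA hB => hA.add hB) Matrix.PosSemidef.zero
        fun m _ => psd_smul (psd_entrywise_pow hB m) (by positivity)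
    have := psd_qf hSN a
    simpa only [Matrix.of_apply, hg] using this
  simp only [Complex.le_def, Complex.zero_re, Complex.zero_im] at hnonneg ⊢
  constructor
  · have hre : Filter.Tendsto (fun N => (g N).re) Filter.atTop (nhds S.re) :=
      (Complex.continuous_re.tendsto S).comp htend
    exact le_of_tendsto_of_tendsto' tendsto_const_nhds hre fun N => (hnonneg N).1
  · have him : Filter.Tendsto (fun N => (g N).im) Filter.atTop (nhds S.im) :=
      (Complex.continuous_im.tendsto S).comp htend
    have h0 : Filter.Tendsto (fun _ : ℕ => (0 : ℝ)) Filter.atTop (nhds S.im) :=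
      him.congr fun N => ((hnonneg N).2).symm
    exact tendsto_nhds_unique tendsto_const_nhds h0

/-- for `0 < h < 1`, the function `φ(f) = exp(-‖f‖²/(4h))` on a complex
Hilbert space is `σ`-positive for `σ(f,g) = Im⟪f,g⟫`: all the matrices
`[exp(-(i/2) Im⟪f_j,f_k⟫) φ(f_j - f_k)]` are positive semidefinite. -/
theorem rescaled_fock_generating_function_sigma_positive
    {H : Type*} [NormedAddCommGroup H] [InnerProductSpace ℂ H]
    (h : ℝ) (hh0 : 0 < h) (hh1 : h < 1) :
    ∀ (n : ℕ) (a : Fin n → ℂ) (f : Fin n → H),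
      0 ≤ ∑ j : Fin n, ∑ k : Fin n,
        a j * (starRingEnd ℂ) (a k) *
          Complex.exp (-(Complex.I / 2) * ((⟪f j, f k⟫_ℂ).im : ℂ)) *
          (Real.exp (-(‖f j - f k‖ ^ 2) / (4 * h)) : ℂ) := by
  intro n a f
  have ha0 : (0:ℝ) ≤ (1 - h) / (4 * h) := div_nonneg (by linarith) (by linarith)
  have hb0 : (0:ℝ) ≤ (1 + h) / (4 * h) := div_nonneg (by linarith) (by linarith)
  set B : Matrix (Fin n) (Fin n) ℂ := Matrix.of fun j k =>
    (((1 - h) / (4 * h) : ℝ) : ℂ) * ⟪f j, f k⟫_ℂ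
      + (((1 + h) / (4 * h) : ℝ) : ℂ) * ⟪f k, f j⟫_ℂ with hBdef
  have hB : B.PosSemidef := by
    have h1 : (Matrix.of fun j k => (((1 - h) / (4 * h) : ℝ) : ℂ) * ⟪f j, f k⟫_ℂ).PosSemidef := by
      have he : ((((1 - h) / (4 * h) : ℝ) : ℂ) • Matrix.of fun j k => (⟪f j, f k⟫_ℂ : ℂ))
          = Matrix.of fun j k => (((1 - h) / (4 * h) : ℝ) : ℂ) * ⟪f j, f k⟫_ℂ := by
        ext j k; simp
      rw [← he]; exact psd_smul (psd_gram f) ha0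
    have h2 : (Matrix.of fun j k => (((1 + h) / (4 * h) : ℝ) : ℂ) * ⟪f k, f j⟫_ℂ).PosSemidef := by
      have hg : (Matrix.of fun j k => (⟪f k, f j⟫_ℂ : ℂ)).PosSemidef := by
        have ht : (Matrix.of fun j k => (⟪f j, f k⟫_ℂ : ℂ))ᵀ
            = Matrix.of fun j k => (⟪f k, f j⟫_ℂ : ℂ) := by
          ext j k; simp [Matrix.transpose_apply]
        rw [← ht]; exact (psd_gram f).transpose
      have he : ((((1 + h) / (4 * h) : ℝ) : ℂ) • Matrix.of fun j k => (⟪f k, f j⟫_ℂ : ℂ))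
          = Matrix.of fun j k => (((1 + h) / (4 * h) : ℝ) : ℂ) * ⟪f k, f j⟫_ℂ := by
        ext j k; simp
      rw [← he]; exact psd_smul hg hb0
    have hsum : B = (Matrix.of fun j k => (((1 - h) / (4 * h) : ℝ) : ℂ) * ⟪f j, f k⟫_ℂ)
        + (Matrix.of fun j k => (((1 + h) / (4 * h) : ℝ) : ℂ) * ⟪f k, f j⟫_ℂ) := by
      ext j k; simp [hBdef]
    rw [hsum]; exact h1.add h2
  have key := psd_exp_qf hB (fun j => ((Real.exp (-(‖f j‖ ^ 2) / (4 * h)) : ℝ) : ℂ) * a j)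
  have hh4 : (4 * h : ℝ) ≠ 0 := by positivity
  have hsum : (∑ j : Fin n, ∑ k : Fin n,
        a j * (starRingEnd ℂ) (a k) *
          Complex.exp (-(Complex.I / 2) * ((⟪f j, f k⟫_ℂ).im : ℂ)) *
          (Real.exp (-(‖f j - f k‖ ^ 2) / (4 * h)) : ℂ))
      = ∑ j : Fin n, ∑ k : Fin n,
          (((Real.exp (-(‖f j‖ ^ 2) / (4 * h)) : ℝ) : ℂ) * a j) *
            (starRingEnd ℂ) (((Real.exp (-(‖f k‖ ^ 2) / (4 * h)) : ℝ) : ℂ) * a k) *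
            Complex.exp (B j k) := by
    refine Finset.sum_congr rfl fun j _ => Finset.sum_congr rfl fun k _ => ?_
    have hnorm : ‖f j - f k‖ ^ 2 = ‖f j‖ ^ 2 - 2 * (⟪f j, f k⟫_ℂ).re + ‖f k‖ ^ 2 := by
      simpa using norm_sub_sq (𝕜 := ℂ) (f j) (f k)
    have hBjk : B j k = (((1 - h) / (4 * h) : ℝ) : ℂ) *
          (((⟪f j, f k⟫_ℂ).re : ℂ) + ((⟪f j, f k⟫_ℂ).im : ℂ) * Complex.I)
        + (((1 + h) / (4 * h) : ℝ) : ℂ) *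
          (((⟪f j, f k⟫_ℂ).re : ℂ) - ((⟪f j, f k⟫_ℂ).im : ℂ) * Complex.I) := by
      have hkj : ⟪f k, f j⟫_ℂ = (starRingEnd ℂ) ⟪f j, f k⟫_ℂ := (inner_conj_symm _ _).symm
      simp only [hBdef, Matrix.of_apply, hkj]
      congr 1
      · congr 1
        exact (Complex.re_add_im _).symm
      · congr 1
        apply Complex.ext <;>
          simp [-inner_conj_symm, Complex.conj_re, Complex.conj_im]
    have hexpid : -(Complex.I / 2) * ((⟪f j, f k⟫_ℂ).im : ℂ)
          + ((-(‖f j - f k‖ ^ 2) / (4 * h) : ℝ) : ℂ)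
        = ((-(‖f j‖ ^ 2) / (4 * h) : ℝ) : ℂ) + ((-(‖f k‖ ^ 2) / (4 * h) : ℝ) : ℂ) + B j k := by
      rw [hBjk, hnorm]
      have h4 : ((h : ℝ) : ℂ) ≠ 0 := by exact_mod_cast hh0.ne'
      push_cast
      field_simp [-Complex.re_add_im]
      ring
    calc a j * (starRingEnd ℂ) (a k) *
          Complex.exp (-(Complex.I / 2) * ((⟪f j, f k⟫_ℂ).im : ℂ)) *
          (Real.exp (-(‖f j - f k‖ ^ 2) / (4 * h)) : ℂ)
        = a j * (starRingEnd ℂ) (a k) *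
            Complex.exp (-(Complex.I / 2) * ((⟪f j, f k⟫_ℂ).im : ℂ)
              + ((-(‖f j - f k‖ ^ 2) / (4 * h) : ℝ) : ℂ)) := by
          rw [_root_.Complex.exp_add, _root_.Complex.ofReal_exp]; ring
      _ = a j * (starRingEnd ℂ) (a k) *
            Complex.exp (((-(‖f j‖ ^ 2) / (4 * h) : ℝ) : ℂ)
              + ((-(‖f k‖ ^ 2) / (4 * h) : ℝ) : ℂ) + B j k) := by rw [hexpid]
      _ = (((Real.exp (-(‖f j‖ ^ 2) / (4 * h)) : ℝ) : ℂ) * a j) *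
            (starRingEnd ℂ) (((Real.exp (-(‖f k‖ ^ 2) / (4 * h)) : ℝ) : ℂ) * a k) *
            Complex.exp (B j k) := by
          rw [_root_.Complex.exp_add, _root_.Complex.exp_add, _root_.map_mul,
            _root_.Complex.conj_ofReal, _root_.Complex.ofReal_exp, _root_.Complex.ofReal_exp]
          ring
  rw [hsum]
  exact key

end
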